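/- For every positive integer t, the number g_t(n) of overpartitions of n with difference between largest and smallest parts at most t, and the largest part not overlined when that difference equals t, satisfies ∑_{n≥1} g_t(n) q^n = (1/(1−q^t)) · ((−q;q)_t/(q;q)_t − 1). -/

import Mathlib

/-- An overpartition: a multiset of parts together with the finite set of
overlined part sizes. -/
abbrev OP : Type := Multiset ℕ × Finset ℕ

/-- Validity: all parts positive, and every overlined size actually occurs as a part
(so at most one part of each size is overlined). -/
def OP.IsValid (π : OP) : Prop := (∀ p ∈ π.1, 0 < p) ∧ ∀ p ∈ π.2, p ∈ π.1

/-- The weight (sum of parts). -/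
def OP.wt (π : OP) : ℕ := π.1.sum

/-- The number of parts. -/
def OP.len (π : OP) : ℕ := Multiset.card π.1

/-- The number of overlined parts. -/
def OP.o (π : OP) : ℕ := π.2.card

/-- The largest part. -/
def OP.maxPart (π : OP) : ℕ := π.1.sup

/-- The smallest part. -/
noncomputable def OP.minPart (π : OP) : ℕ := sInf {p | p ∈ π.1}

/-- The number of parts equal to `t`. -/
def OP.mT (t : ℕ) (π : OP) : ℕ := π.1.count t

/-- Membership in `G_t`: nonempty, valid, largest minus smallest part at most `t`,
and the largest part not overlined when this difference is exactly `t`. -/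
def InG (t : ℕ) (π : OP) : Prop :=
  π.IsValid ∧ π.1 ≠ 0 ∧ π.maxPart - π.minPart ≤ t ∧
    (π.maxPart - π.minPart = t → π.maxPart ∉ π.2)

/-- Membership in `P_t`: nonempty, valid, all parts at most `t`, no part `t` overlined. -/
def InP (t : ℕ) (π : OP) : Prop :=
  π.IsValid ∧ π.1 ≠ 0 ∧ (∀ p ∈ π.1, p ≤ t) ∧ t ∉ π.2

/-- The map `φ`: each part is replaced by its residue mod `t` (deleted if zero,
retaining its overline) together with `⌊part/t⌋` non-overlined copies of `t`. -/
def phi (t : ℕ) (π : OP) : OP :=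
  (Multiset.replicate (π.1.map (· / t)).sum t + (π.1.map (· % t)).filter (· ≠ 0),
   (π.2.image (· % t)).erase 0)

/-- Membership in `B_t`: bipartitions whose first component has all parts equal to `t`
(none overlined) and whose second component is a nonempty overpartition with parts `≤ t`. -/
def InB (t : ℕ) (b : Multiset ℕ × OP) : Prop :=
  (∀ a ∈ b.1, a = t) ∧ b.2.IsValid ∧ b.2.1 ≠ 0 ∧ ∀ p ∈ b.2.1, p ≤ t

/-- The map `ψ`: merge the two components, un-overlining any overlined `t`. -/
def psi (t : ℕ) (b : Multiset ℕ × OP) : OP := (b.1 + b.2.1, b.2.2.erase t)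

open Finset PowerSeries

-- finiteness lemmas
lemma finM (n : ℕ) (P : Multiset ℕ → Prop)
    (h : ∀ M, P M → (∀ x ∈ M, 0 < x) ∧ M.sum = n) : Finite {M : Multiset ℕ // P M} := by
  apply Finite.of_injective (β := Nat.Partition n)
    (fun M => ⟨M.1, fun {i} hi => (h M.1 M.2).1 i hi, (h M.1 M.2).2⟩)
  intro a b hab
  exact Subtype.ext (congrArg Nat.Partition.parts hab)

lemma finF (n : ℕ) (P : Finset ℕ → Prop)
    (h : ∀ F, P F → (∀ x ∈ F, 0 < x) ∧ (∑ x ∈ F, x) = n) : Finite {F : Finset ℕ // P F} := by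
  apply Finite.of_injective (β := Nat.Partition n)
    (fun F => ⟨F.1.val, fun {i} hi => (h F.1 F.2).1 i hi, by
      have := (h F.1 F.2).2
      rw [Finset.sum] at this; simpa using this⟩)
  intro a b hab
  have : a.1.val = b.1.val := congrArg Nat.Partition.parts hab
  exact Subtype.ext (Finset.val_injective this)

lemma finOP (n : ℕ) (P : OP → Prop)
    (h : ∀ π, P π → (∀ x ∈ π.1, 0 < x) ∧ (∀ p ∈ π.2, p ∈ π.1) ∧ π.1.sum = n) :
    Finite {π : OP // P π} := by
  haveI : Finite (Nat.Partition n × {F : Finset ℕ // F ∈ (Finset.range (n+1)).powerset}) := by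
    clear h; infer_instance
  apply Finite.of_injective
    (β := Nat.Partition n × {F : Finset ℕ // F ∈ (Finset.range (n+1)).powerset})
    (fun (π : {π : OP // P π}) => (⟨π.1.1, fun {i} hi => (h π.1 π.2).1 i hi, (h π.1 π.2).2.2⟩,
      ⟨π.1.2, by
        rw [Finset.mem_powerset]
        intro p hp
        have hp1 : p ∈ π.1.1 := (h π.1 π.2).2.1 p hp
        have hle : p ≤ π.1.1.sum := Multiset.single_le_sum (fun x _ => Nat.zero_le x) p hp1
        rw [(h π.1 π.2).2.2] at hle
        rw [Finset.mem_range]; omega⟩))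
  intro a b hab
  have h1 : a.1.1 = b.1.1 := congrArg Nat.Partition.parts (congrArg Prod.fst hab)
  have h2 : a.1.2 = b.1.2 := congrArg Subtype.val (congrArg Prod.snd hab)
  exact Subtype.ext (Prod.ext h1 h2)

lemma finOfImp {α : Type*} {p q : α → Prop} (h : ∀ x, q x → p x) (_ : Finite {x // p x}) :
    Finite {x : α // q x} :=
  Finite.of_injective (fun y : {x // q x} => (⟨y.1, h y.1 y.2⟩ : {x // p x}))
    (fun a b hab => Subtype.ext (by simpa [Subtype.ext_iff] using hab))

open Classical in
lemma card_split {α : Type*} (p q : α → Prop) (hfin : Finite {x // p x}) :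
    Nat.card {x // p x} = Nat.card {x // p x ∧ q x} + Nat.card {x // p x ∧ ¬ q x} := by
  haveI := hfin
  haveI : Finite {x // p x ∧ q x} := finOfImp (fun x hx => hx.1) hfin
  haveI : Finite {x // p x ∧ ¬ q x} := finOfImp (fun x hx => hx.1) hfin
  have e : {x // p x} ≃ {x // p x ∧ q x} ⊕ {x // p x ∧ ¬ q x} := by
    refine Equiv.trans (Equiv.sumCompl (fun y : {x // p x} => q y.1)).symm ?_
    exact Equiv.sumCongr (Equiv.subtypeSubtypeEquivSubtypeInter p q)
      (Equiv.subtypeSubtypeEquivSubtypeInter p (fun x => ¬ q x))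
  rw [Nat.card_congr e, Nat.card_sum]

lemma card_fiber_sum {α : Type*} (I : Finset ℕ) (f : α → ℕ) :
    ∀ (p : α → Prop), Finite {x // p x} → (∀ x, p x → f x ∈ I) →
    Nat.card {x // p x} = ∑ s ∈ I, Nat.card {x // p x ∧ f x = s} := by
  induction I using Finset.induction with
  | empty =>
    intro p hfin hf
    haveI : IsEmpty {x // p x} := ⟨fun x => by simpa using hf x.1 x.2⟩
    simp
  | @insert a s ha ih =>
    intro p hfin hf
    rw [Finset.sum_insert ha, card_split p (fun x => f x = a) hfin]
    congr 1
    haveI : Finite {x // p x ∧ f x ≠ a} := finOfImp (fun x hx => hx.1) hfin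
    rw [ih (fun x => p x ∧ f x ≠ a) this (fun x hx => by
      have := hf x hx.1
      rw [Finset.mem_insert] at this
      tauto)]
    apply Finset.sum_congr rfl
    intro b hb
    apply Nat.card_congr (Equiv.subtypeEquivRight _)
    intro x
    constructor
    · rintro ⟨⟨hp, _⟩, hfb⟩; exact ⟨hp, hfb⟩
    · rintro ⟨hp, hfb⟩; exact ⟨⟨hp, fun hfa => ha (by rw [← hfa, hfb]; exact hb)⟩, hfb⟩

-- counting functions
noncomputable def pcnt (A : Finset ℕ) (n : ℕ) : ℕ :=
  Nat.card {M : Multiset ℕ // (∀ x ∈ M, x ∈ A) ∧ M.sum = n}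

noncomputable def scnt (A : Finset ℕ) (n : ℕ) : ℕ :=
  Nat.card {F : Finset ℕ // (∀ x ∈ F, x ∈ A) ∧ (∑ x ∈ F, x) = n}

noncomputable def Pgf (A : Finset ℕ) : PowerSeries ℚ := PowerSeries.mk fun n => (pcnt A n : ℚ)
noncomputable def Sgf (A : Finset ℕ) : PowerSeries ℚ := PowerSeries.mk fun n => (scnt A n : ℚ)

lemma pfin (A : Finset ℕ) (h0 : 0 ∉ A) (n : ℕ) :
    Finite {M : Multiset ℕ // (∀ x ∈ M, x ∈ A) ∧ M.sum = n} :=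
  finM n _ (fun M hM => ⟨fun x hx => Nat.pos_of_ne_zero (fun hx0 => h0 (hx0 ▸ hM.1 x hx)),
    hM.2⟩)

lemma sfin (A : Finset ℕ) (h0 : 0 ∉ A) (n : ℕ) :
    Finite {F : Finset ℕ // (∀ x ∈ F, x ∈ A) ∧ (∑ x ∈ F, x) = n} :=
  finF n _ (fun F hF => ⟨fun x hx => Nat.pos_of_ne_zero (fun hx0 => h0 (hx0 ▸ hF.1 x hx)),
    hF.2⟩)

lemma pcnt_insert (a : ℕ) (A : Finset ℕ) (ha : a ∉ A) (h0 : 0 ∉ A) (ha0 : a ≠ 0) (n : ℕ) :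
    pcnt (insert a A) n = pcnt A n + (if a ≤ n then pcnt (insert a A) (n - a) else 0) := by
  have h0' : (0 : ℕ) ∉ insert a A := by
    intro h
    rcases Finset.mem_insert.1 h with h | h
    · exact ha0 h.symm
    · exact h0 h
  haveI hfin := pfin (insert a A) h0' n
  rw [pcnt, card_split _ (fun M => a ∈ M) hfin]
  have e1 : Nat.card {M : Multiset ℕ //
      ((∀ x ∈ M, x ∈ insert a A) ∧ M.sum = n) ∧ a ∉ M} = pcnt A n := by
    apply Nat.card_congr (Equiv.subtypeEquivRight _)
    intro M
    constructor
    · rintro ⟨⟨hmem, hsum⟩, hna⟩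
      exact ⟨fun x hx => by
        rcases Finset.mem_insert.1 (hmem x hx) with h | h
        · exact absurd (h ▸ hx) hna
        · exact h, hsum⟩
    · rintro ⟨hmem, hsum⟩
      exact ⟨⟨fun x hx => Finset.mem_insert_of_mem (hmem x hx), hsum⟩,
        fun hx => ha (hmem a hx)⟩
  have e2 : Nat.card {M : Multiset ℕ //
      ((∀ x ∈ M, x ∈ insert a A) ∧ M.sum = n) ∧ a ∈ M} =
      (if a ≤ n then pcnt (insert a A) (n - a) else 0) := by
    split_ifs with hle
    · apply Nat.card_congr
      refine ⟨fun M => ⟨M.1.erase a, ⟨fun x hx => M.2.1.1 x (Multiset.mem_of_mem_erase hx), ?_⟩⟩,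
        fun M => ⟨a ::ₘ M.1, ⟨⟨fun x hx => ?_, ?_⟩, Multiset.mem_cons_self a _⟩⟩, ?_, ?_⟩
      · have h1 : a ::ₘ M.1.erase a = M.1 := Multiset.cons_erase M.2.2
        have h2 : (a ::ₘ M.1.erase a).sum = n := by rw [h1]; exact M.2.1.2
        rw [Multiset.sum_cons] at h2; omega
      · rcases Multiset.mem_cons.1 hx with h | h
        · exact h ▸ Finset.mem_insert_self a A
        · exact M.2.1 x h
      · rw [Multiset.sum_cons, M.2.2]; omega
      · intro M; exact Subtype.ext (Multiset.cons_erase M.2.2)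
      · intro M; exact Subtype.ext (Multiset.erase_cons_head a M.1)
    · have : IsEmpty {M : Multiset ℕ //
          ((∀ x ∈ M, x ∈ insert a A) ∧ M.sum = n) ∧ a ∈ M} := by
        constructor
        rintro ⟨M, ⟨_, hsum⟩, hmem⟩
        exact hle (hsum ▸ Multiset.single_le_sum (fun x _ => Nat.zero_le x) a hmem)
      exact Nat.card_of_isEmpty
  rw [e1, e2]; ring

lemma scnt_insert (a : ℕ) (A : Finset ℕ) (ha : a ∉ A) (h0 : 0 ∉ A) (ha0 : a ≠ 0) (n : ℕ) :
    scnt (insert a A) n = scnt A n + (if a ≤ n then scnt A (n - a) else 0) := by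
  have h0' : (0 : ℕ) ∉ insert a A := by
    intro h
    rcases Finset.mem_insert.1 h with h | h
    · exact ha0 h.symm
    · exact h0 h
  haveI hfin := sfin (insert a A) h0' n
  rw [scnt, card_split _ (fun F => a ∈ F) hfin]
  have e1 : Nat.card {F : Finset ℕ //
      ((∀ x ∈ F, x ∈ insert a A) ∧ (∑ x ∈ F, x) = n) ∧ a ∉ F} = scnt A n := by
    apply Nat.card_congr (Equiv.subtypeEquivRight _)
    intro F
    constructor
    · rintro ⟨⟨hmem, hsum⟩, hna⟩
      exact ⟨fun x hx => by
        rcases Finset.mem_insert.1 (hmem x hx) with h | h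
        · exact absurd (h ▸ hx) hna
        · exact h, hsum⟩
    · rintro ⟨hmem, hsum⟩
      exact ⟨⟨fun x hx => Finset.mem_insert_of_mem (hmem x hx), hsum⟩,
        fun hx => ha (hmem a hx)⟩
  have e2 : Nat.card {F : Finset ℕ //
      ((∀ x ∈ F, x ∈ insert a A) ∧ (∑ x ∈ F, x) = n) ∧ a ∈ F} =
      (if a ≤ n then scnt A (n - a) else 0) := by
    split_ifs with hle
    · apply Nat.card_congr
      refine ⟨fun F => ⟨F.1.erase a, ⟨fun x hx => ?_, ?_⟩⟩,
        fun F => ⟨insert a F.1, ⟨⟨fun x hx => ?_, ?_⟩, Finset.mem_insert_self a _⟩⟩, ?_, ?_⟩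
      · have := Finset.mem_erase.1 hx
        rcases Finset.mem_insert.1 (F.2.1.1 x this.2) with h | h
        · exact absurd h this.1
        · exact h
      · have h3 := Finset.add_sum_erase F.1 (fun x => x) F.2.2
        have h2 : a + ∑ x ∈ F.1.erase a, x = n := by
          simpa using h3.trans F.2.1.2
        omega
      · rcases Finset.mem_insert.1 hx with h | h
        · exact h ▸ Finset.mem_insert_self a A
        · exact Finset.mem_insert_of_mem (F.2.1 x h)
      · have hna : a ∉ F.1 := fun h => ha (F.2.1 a h)
        rw [Finset.sum_insert hna, F.2.2]; omega
      · intro F; exact Subtype.ext (Finset.insert_erase F.2.2)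
      · intro F
        have hna : a ∉ F.1 := fun h => ha (F.2.1 a h)
        exact Subtype.ext (Finset.erase_insert hna)
    · have : IsEmpty {F : Finset ℕ //
          ((∀ x ∈ F, x ∈ insert a A) ∧ (∑ x ∈ F, x) = n) ∧ a ∈ F} := by
        constructor
        rintro ⟨F, ⟨_, hsum⟩, hmem⟩
        exact hle (hsum ▸ Finset.single_le_sum (fun x _ => Nat.zero_le x) hmem)
      exact Nat.card_of_isEmpty
  rw [e1, e2]; ring

lemma Pgf_insert (a : ℕ) (A : Finset ℕ) (ha : a ∉ A) (h0 : 0 ∉ A) (ha0 : a ≠ 0) :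
    (1 - PowerSeries.X ^ a) * Pgf (insert a A) = Pgf A := by
  ext n
  rw [sub_mul, one_mul, map_sub, PowerSeries.coeff_X_pow_mul']
  simp only [Pgf, PowerSeries.coeff_mk]
  rw [pcnt_insert a A ha h0 ha0 n]
  split_ifs with h <;> push_cast <;> ring

lemma Sgf_insert (a : ℕ) (A : Finset ℕ) (ha : a ∉ A) (h0 : 0 ∉ A) (ha0 : a ≠ 0) :
    Sgf (insert a A) = (1 + PowerSeries.X ^ a) * Sgf A := by
  ext n
  rw [add_mul, one_mul, map_add, PowerSeries.coeff_X_pow_mul']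
  simp only [Sgf, PowerSeries.coeff_mk]
  rw [scnt_insert a A ha h0 ha0 n]
  split_ifs with h <;> push_cast <;> ring

lemma pcnt_empty (n : ℕ) : pcnt ∅ n = if n = 0 then 1 else 0 := by
  rw [pcnt]
  split_ifs with h
  · subst h
    haveI : Unique {M : Multiset ℕ // (∀ x ∈ M, x ∈ (∅ : Finset ℕ)) ∧ M.sum = 0} := by
      refine ⟨⟨⟨0, by simp⟩⟩, fun M => Subtype.ext ?_⟩
      exact Multiset.eq_zero_of_forall_notMem (fun x hx => by simpa using M.2.1 x hx)
    exact Nat.card_unique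
  · haveI : IsEmpty {M : Multiset ℕ // (∀ x ∈ M, x ∈ (∅ : Finset ℕ)) ∧ M.sum = n} := by
      constructor
      rintro ⟨M, hmem, hsum⟩
      have : M = 0 := Multiset.eq_zero_of_forall_notMem (fun x hx => by simpa using hmem x hx)
      rw [this] at hsum
      exact h (hsum ▸ rfl)
    exact Nat.card_of_isEmpty

lemma scnt_empty (n : ℕ) : scnt ∅ n = if n = 0 then 1 else 0 := by
  rw [scnt]
  split_ifs with h
  · subst h
    haveI : Unique {F : Finset ℕ // (∀ x ∈ F, x ∈ (∅ : Finset ℕ)) ∧ (∑ x ∈ F, x) = 0} := by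
      refine ⟨⟨⟨∅, by simp⟩⟩, fun F => Subtype.ext ?_⟩
      exact Finset.eq_empty_of_forall_notMem (fun x hx => by simpa using F.2.1 x hx)
    exact Nat.card_unique
  · haveI : IsEmpty {F : Finset ℕ // (∀ x ∈ F, x ∈ (∅ : Finset ℕ)) ∧ (∑ x ∈ F, x) = n} := by
      constructor
      rintro ⟨F, hmem, hsum⟩
      have : F = ∅ := Finset.eq_empty_of_forall_notMem (fun x hx => by simpa using hmem x hx)
      rw [this] at hsum
      simp at hsum
      exact h hsum.symm
    exact Nat.card_of_isEmpty

lemma Pgf_empty : Pgf ∅ = 1 := by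
  ext n
  simp only [Pgf, PowerSeries.coeff_mk, pcnt_empty, PowerSeries.coeff_one]
  split_ifs <;> simp

lemma Sgf_empty : Sgf ∅ = 1 := by
  ext n
  simp only [Sgf, PowerSeries.coeff_mk, scnt_empty, PowerSeries.coeff_one]
  split_ifs <;> simp

lemma Pgf_mul_eq_one : ∀ (A : Finset ℕ), 0 ∉ A →
    (∏ a ∈ A, (1 - PowerSeries.X ^ a : PowerSeries ℚ)) * Pgf A = 1 := by
  intro A
  induction A using Finset.induction with
  | empty => intro _; rw [Pgf_empty, Finset.prod_empty, one_mul]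
  | @insert a A ha ih =>
    intro h0'
    have ha0 : a ≠ 0 := fun h => h0' (h ▸ Finset.mem_insert_self a A)
    have h0 : 0 ∉ A := fun h => h0' (Finset.mem_insert_of_mem h)
    rw [Finset.prod_insert ha, mul_assoc, mul_comm (∏ a ∈ A, (1 - PowerSeries.X ^ a)),
      ← mul_assoc, Pgf_insert a A ha h0 ha0, mul_comm, ih h0]

lemma Sgf_eq : ∀ (A : Finset ℕ), 0 ∉ A →
    Sgf A = ∏ a ∈ A, (1 + PowerSeries.X ^ a : PowerSeries ℚ) := by
  intro A
  induction A using Finset.induction with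
  | empty => intro _; rw [Sgf_empty, Finset.prod_empty]
  | @insert a A ha ih =>
    intro h0'
    have ha0 : a ≠ 0 := fun h => h0' (h ▸ Finset.mem_insert_self a A)
    have h0 : 0 ∉ A := fun h => h0' (Finset.mem_insert_of_mem h)
    rw [Finset.prod_insert ha, Sgf_insert a A ha h0 ha0, ih h0]

noncomputable def ocnt (A B : Finset ℕ) (n : ℕ) : ℕ :=
  Nat.card {π : OP // π.IsValid ∧ (∀ p ∈ π.1, p ∈ A) ∧ (∀ p ∈ π.2, p ∈ B) ∧ π.wt = n}

noncomputable def Ogf (A B : Finset ℕ) : PowerSeries ℚ :=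
  PowerSeries.mk fun n => (ocnt A B n : ℚ)

lemma ofin (A B : Finset ℕ) (h0 : 0 ∉ A) (n : ℕ) :
    Finite {π : OP // π.IsValid ∧ (∀ p ∈ π.1, p ∈ A) ∧ (∀ p ∈ π.2, p ∈ B) ∧ π.wt = n} :=
  finOP n _ (fun π hπ => ⟨fun x hx => Nat.pos_of_ne_zero (fun hx0 => h0 (hx0 ▸ hπ.2.1 x hx)),
    fun p hp => hπ.1.2 p hp, hπ.2.2.2⟩)

lemma val_le_of_mem {S : Finset ℕ} {M : Multiset ℕ} (h : ∀ p ∈ S, p ∈ M) : S.val ≤ M := by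
  rw [Multiset.le_iff_count]
  intro a
  by_cases haS : a ∈ S
  · rw [Multiset.count_eq_one_of_mem S.nodup haS]
    exact Multiset.one_le_count_iff_mem.2 (h a haS)
  · rw [Multiset.count_eq_zero_of_notMem haS]
    exact Nat.zero_le _

lemma fsum_val (S : Finset ℕ) : S.val.sum = ∑ x ∈ S, x := by rw [Finset.sum]; simp

lemma ocnt_conv (A B : Finset ℕ) (hBA : B ⊆ A) (h0 : 0 ∉ A) (n : ℕ) :
    ocnt A B n = ∑ i ∈ Finset.range (n+1), scnt B i * pcnt A (n - i) := by
  haveI hfin := ofin A B h0 n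
  rw [ocnt, card_fiber_sum (Finset.range (n+1)) (fun π : OP => ∑ x ∈ π.2, x) _ hfin ?hmem]
  case hmem =>
    intro π hπ
    have hle : π.2.val ≤ π.1 := val_le_of_mem hπ.1.2
    have h1 : (π.1 - π.2.val) + π.2.val = π.1 := tsub_add_cancel_of_le hle
    have h2 : (π.1 - π.2.val).sum + π.2.val.sum = π.1.sum := by rw [← Multiset.sum_add, h1]
    have h3 : π.1.sum = n := hπ.2.2.2
    rw [fsum_val] at h2
    show (∑ x ∈ π.2, x) ∈ Finset.range (n+1)
    rw [Finset.mem_range]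
    omega
  apply Finset.sum_congr rfl
  intro i hi
  have hin : i ≤ n := by rw [Finset.mem_range] at hi; omega
  have e : {π : OP // (π.IsValid ∧ (∀ p ∈ π.1, p ∈ A) ∧ (∀ p ∈ π.2, p ∈ B) ∧ π.wt = n) ∧
      (∑ x ∈ π.2, x) = i} ≃
      {F : Finset ℕ // (∀ x ∈ F, x ∈ B) ∧ (∑ x ∈ F, x) = i} ×
      {M : Multiset ℕ // (∀ x ∈ M, x ∈ A) ∧ M.sum = n - i} := by
    refine ⟨fun π => (⟨π.1.2, π.2.1.2.2.1, π.2.2⟩, ⟨π.1.1 - π.1.2.val, fun x hx => ?_, ?_⟩),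
      fun FM => ⟨(FM.2.1 + FM.1.1.val, FM.1.1), ⟨⟨fun x hx => ?_, fun p hp => ?_⟩,
        fun p hp => ?_, fun p hp => ?_, ?_⟩, ?_⟩, ?_, ?_⟩
    · exact π.2.1.2.1 x (Multiset.mem_of_le (tsub_le_self) hx)
    · have hle : π.1.2.val ≤ π.1.1 := val_le_of_mem π.2.1.1.2
      have h1 : (π.1.1 - π.1.2.val) + π.1.2.val = π.1.1 := tsub_add_cancel_of_le hle
      have h2 : (π.1.1 - π.1.2.val).sum + π.1.2.val.sum = π.1.1.sum := by
        rw [← Multiset.sum_add, h1]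
      have h3 : π.1.1.sum = n := π.2.1.2.2.2
      have h4 : π.1.2.val.sum = i := by rw [fsum_val]; exact π.2.2
      omega
    · rcases Multiset.mem_add.1 hx with h | h
      · exact Nat.pos_of_ne_zero (fun hx0 => h0 (hx0 ▸ FM.2.2.1 x h))
      · exact Nat.pos_of_ne_zero (fun hx0 => h0 (hx0 ▸ hBA (FM.1.2.1 x (Finset.mem_def.2 h))))
    · exact Multiset.mem_add.2 (Or.inr (Finset.mem_def.1 hp))
    · rcases Multiset.mem_add.1 hp with h | h
      · exact FM.2.2.1 p h
      · exact hBA (FM.1.2.1 p (Finset.mem_def.2 h))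
    · exact FM.1.2.1 p hp
    · show (FM.2.1 + FM.1.1.val).sum = n
      rw [Multiset.sum_add, FM.2.2.2, fsum_val, FM.1.2.2]
      omega
    · exact FM.1.2.2
    · intro π
      apply Subtype.ext
      apply Prod.ext
      · exact tsub_add_cancel_of_le (val_le_of_mem π.2.1.1.2)
      · rfl
    · intro FM
      apply Prod.ext
      · apply Subtype.ext; rfl
      · apply Subtype.ext
        exact add_tsub_cancel_right _ _
  rw [Nat.card_congr e, Nat.card_prod, scnt, pcnt]

lemma Ogf_eq (A B : Finset ℕ) (hBA : B ⊆ A) (h0 : 0 ∉ A) : Ogf A B = Sgf B * Pgf A := by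
  ext n
  rw [PowerSeries.coeff_mul, Finset.Nat.sum_antidiagonal_eq_sum_range_succ_mk]
  simp only [Ogf, Sgf, Pgf, PowerSeries.coeff_mk]
  rw [ocnt_conv A B hBA h0 n]
  push_cast
  rfl

noncomputable def gcnt (t n : ℕ) : ℕ := Nat.card {π : OP // InG t π ∧ π.wt = n}
noncomputable def ccnt (t s n : ℕ) : ℕ :=
  Nat.card {π : OP // (InG t π ∧ π.wt = n) ∧ π.minPart = s}

lemma gfin (t n : ℕ) : Finite {π : OP // InG t π ∧ π.wt = n} :=
  finOP n _ (fun π hπ => ⟨hπ.1.1.1, hπ.1.1.2, hπ.2⟩)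

lemma min_mem {π : OP} (h : π.1 ≠ 0) : π.minPart ∈ π.1 := by
  have : {p | p ∈ π.1}.Nonempty := by
    rcases Multiset.exists_mem_of_ne_zero h with ⟨a, ha⟩
    exact ⟨a, ha⟩
  exact Nat.sInf_mem this

lemma min_le {π : OP} {p : ℕ} (hp : p ∈ π.1) : π.minPart ≤ p := Nat.sInf_le hp

lemma wt_mem_le {π : OP} {p : ℕ} (hp : p ∈ π.1) : p ≤ π.wt :=
  Multiset.single_le_sum (fun x _ => Nat.zero_le x) p hp

lemma gcnt_eq (t n : ℕ) : gcnt t n = ∑ s ∈ Finset.Icc 1 n, ccnt t s n := by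
  rw [gcnt, card_fiber_sum (Finset.Icc 1 n) (fun π : OP => π.minPart) _ (gfin t n) ?hmem]
  case hmem =>
    intro π hπ
    have hne : π.1 ≠ 0 := hπ.1.2.1
    have hm : π.minPart ∈ π.1 := min_mem hne
    have h1 : 1 ≤ π.minPart := hπ.1.1.1 _ hm
    have h2 : π.minPart ≤ π.wt := wt_mem_le hm
    show π.minPart ∈ Finset.Icc 1 n
    rw [Finset.mem_Icc]
    omega
  apply Finset.sum_congr rfl
  intro s _
  apply Nat.card_congr (Equiv.subtypeEquivRight _)
  intro x
  exact Iff.rfl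

lemma ccnt_zero (t s n : ℕ) (h : n < s) : ccnt t s n = 0 := by
  haveI : IsEmpty {π : OP // (InG t π ∧ π.wt = n) ∧ π.minPart = s} := by
    constructor
    rintro ⟨π, ⟨hg, hwt⟩, hmin⟩
    have hm : π.minPart ∈ π.1 := min_mem hg.2.1
    have := wt_mem_le hm
    omega
  exact Nat.card_of_isEmpty

lemma ocnt_split (t s n : ℕ) (ht : 0 < t) (hs : 0 < s) :
    ocnt (Finset.Icc s (s+t)) (Finset.Icc s (s+t-1)) n =
      ccnt t s n + ocnt (Finset.Icc (s+1) (s+t)) (Finset.Icc (s+1) (s+t-1)) n := by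
  have h0 : (0 : ℕ) ∉ Finset.Icc s (s+t) := by rw [Finset.mem_Icc]; omega
  haveI hfin := ofin (Finset.Icc s (s+t)) (Finset.Icc s (s+t-1)) h0 n
  rw [ocnt, card_split _ (fun π : OP => s ∈ π.1) hfin]
  congr 1
  · rw [ccnt]
    apply Nat.card_congr (Equiv.subtypeEquivRight _)
    intro π
    constructor
    · rintro ⟨⟨hval, hpA, hpB, hwt⟩, hsm⟩
      have hne : π.1 ≠ 0 := fun h => by rw [h] at hsm; simp at hsm
      have hminle : π.minPart ≤ s := min_le hsm
      have hminmem : π.minPart ∈ π.1 := min_mem hne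
      have hmin2 : s ≤ π.minPart := (Finset.mem_Icc.1 (hpA _ hminmem)).1
      have hmin : π.minPart = s := by omega
      have hmax : π.maxPart ≤ s + t := Multiset.sup_le.2 (fun b hb => (Finset.mem_Icc.1 (hpA b hb)).2)
      have hsmax : s ≤ π.maxPart := Multiset.le_sup hsm
      refine ⟨⟨⟨hval, hne, by rw [hmin]; omega, ?_⟩, hwt⟩, hmin⟩
      intro hdiff hmem
      have : π.maxPart ∈ Finset.Icc s (s+t-1) := hpB _ hmem
      rw [Finset.mem_Icc] at this
      rw [hmin] at hdiff
      omega
    · rintro ⟨⟨⟨hval, hne, hdle, hdov⟩, hwt⟩, hmin⟩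
      have hminmem : π.minPart ∈ π.1 := min_mem hne
      have hsm : s ∈ π.1 := hmin ▸ hminmem
      have hsmax : s ≤ π.maxPart := Multiset.le_sup hsm
      have hmaxle : π.maxPart ≤ s + t := by rw [hmin] at hdle; omega
      refine ⟨⟨hval, fun p hp => ?_, fun p hp => ?_, hwt⟩, hsm⟩
      · rw [Finset.mem_Icc]
        have h1 : π.minPart ≤ p := min_le hp
        have h2 : p ≤ π.maxPart := Multiset.le_sup hp
        rw [hmin] at h1
        omega
      · rw [Finset.mem_Icc]
        have hp1 : p ∈ π.1 := hval.2 p hp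
        have h1 : π.minPart ≤ p := min_le hp1
        have h2 : p ≤ π.maxPart := Multiset.le_sup hp1
        rw [hmin] at h1
        refine ⟨h1, ?_⟩
        by_contra hcon
        have hpst : p = s + t := by omega
        have hmaxeq : π.maxPart = s + t := by omega
        have : π.maxPart ∉ π.2 := hdov (by rw [hmaxeq, hmin]; omega)
        exact this (by rw [hmaxeq, ← hpst]; exact hp)
  · rw [ocnt]
    apply Nat.card_congr (Equiv.subtypeEquivRight _)
    intro π
    constructor
    · rintro ⟨⟨hval, hpA, hpB, hwt⟩, hns⟩
      refine ⟨hval, fun p hp => ?_, fun p hp => ?_, hwt⟩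
      · have := Finset.mem_Icc.1 (hpA p hp)
        rw [Finset.mem_Icc]
        have : p ≠ s := fun h => hns (h ▸ hp)
        omega
      · have h1 := Finset.mem_Icc.1 (hpB p hp)
        have hp1 : p ∈ π.1 := hval.2 p hp
        have : p ≠ s := fun h => hns (h ▸ hp1)
        rw [Finset.mem_Icc]
        omega
    · rintro ⟨hval, hpA, hpB, hwt⟩
      refine ⟨⟨hval, fun p hp => ?_, fun p hp => ?_, hwt⟩, fun hs' => ?_⟩
      · have := Finset.mem_Icc.1 (hpA p hp)
        rw [Finset.mem_Icc]; omega
      · have := Finset.mem_Icc.1 (hpB p hp)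
        rw [Finset.mem_Icc]; omega
      · have := Finset.mem_Icc.1 (hpA s hs')
        omega

noncomputable def Cgf (t s : ℕ) : PowerSeries ℚ := PowerSeries.mk fun n => (ccnt t s n : ℚ)
noncomputable def Ggf (t : ℕ) : PowerSeries ℚ := PowerSeries.mk fun n => (gcnt t n : ℚ)
noncomputable def Agf (t s : ℕ) : PowerSeries ℚ :=
  Sgf (Finset.Icc s (s+t-1)) * Pgf (Finset.Icc s (s+t-1))

lemma Cgf_eq (t s : ℕ) (ht : 0 < t) (hs : 0 < s) :
    Cgf t s = Ogf (Finset.Icc s (s+t)) (Finset.Icc s (s+t-1)) -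
      Ogf (Finset.Icc (s+1) (s+t)) (Finset.Icc (s+1) (s+t-1)) := by
  ext n
  rw [map_sub]
  simp only [Cgf, Ogf, PowerSeries.coeff_mk]
  rw [ocnt_split t s n ht hs]
  push_cast
  ring

lemma cc_prod_one (I : Finset ℕ) (h0 : 0 ∉ I) :
    PowerSeries.constantCoeff (R := ℚ) (∏ j ∈ I, (1 - PowerSeries.X ^ j)) = 1 := by
  rw [map_prod]
  rw [Finset.prod_congr rfl (fun j hj => ?_), Finset.prod_const_one]
  have hj0 : j ≠ 0 := fun h => h0 (h ▸ hj)
  rw [map_sub, map_one, map_pow, PowerSeries.constantCoeff_X, zero_pow hj0, sub_zero]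

lemma ne_zero_of_cc {f : PowerSeries ℚ} (h : PowerSeries.constantCoeff (R := ℚ) f = 1) : f ≠ 0 :=
  fun h0 => by rw [h0, map_zero] at h; exact zero_ne_one h

lemma key_identity (t s : ℕ) (ht : 0 < t) (hs : 0 < s) :
    (1 - PowerSeries.X ^ t) * Cgf t s = Agf t s - Agf t (s+1) := by
  have e1 : Finset.Icc s (s+t) = insert s (Finset.Icc (s+1) (s+t)) := by
    ext x; simp only [Finset.mem_Icc, Finset.mem_insert]; omega
  have e2 : Finset.Icc (s+1) (s+t) = insert (s+t) (Finset.Icc (s+1) (s+t-1)) := by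
    ext x; simp only [Finset.mem_Icc, Finset.mem_insert]; omega
  have e3 : Finset.Icc s (s+t-1) = insert s (Finset.Icc (s+1) (s+t-1)) := by
    ext x; simp only [Finset.mem_Icc, Finset.mem_insert]; omega
  have e4 : Finset.Icc (s+1) (s+1+t-1) = Finset.Icc (s+1) (s+t) := by
    congr 1; omega
  have hn1 : s ∉ Finset.Icc (s+1) (s+t) := by rw [Finset.mem_Icc]; omega
  have hn2 : s+t ∉ Finset.Icc (s+1) (s+t-1) := by rw [Finset.mem_Icc]; omega
  have hn3 : s ∉ Finset.Icc (s+1) (s+t-1) := by rw [Finset.mem_Icc]; omega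
  have h01 : (0:ℕ) ∉ Finset.Icc s (s+t) := by rw [Finset.mem_Icc]; omega
  have h02 : (0:ℕ) ∉ Finset.Icc (s+1) (s+t) := by rw [Finset.mem_Icc]; omega
  have h03 : (0:ℕ) ∉ Finset.Icc s (s+t-1) := by rw [Finset.mem_Icc]; omega
  have h04 : (0:ℕ) ∉ Finset.Icc (s+1) (s+t-1) := by rw [Finset.mem_Icc]; omega
  have hBA1 : Finset.Icc s (s+t-1) ⊆ Finset.Icc s (s+t) :=
    Finset.Icc_subset_Icc (le_refl s) (by omega)
  have hBA2 : Finset.Icc (s+1) (s+t-1) ⊆ Finset.Icc (s+1) (s+t) :=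
    Finset.Icc_subset_Icc (le_refl (s+1)) (by omega)
  have hp1 : (∏ j ∈ Finset.Icc s (s+t), (1 - PowerSeries.X ^ j : PowerSeries ℚ)) =
      (1 - PowerSeries.X ^ s) * ((1 - PowerSeries.X ^ (s+t)) *
      (∏ j ∈ Finset.Icc (s+1) (s+t-1), (1 - PowerSeries.X ^ j))) := by
    rw [e1, Finset.prod_insert hn1, e2, Finset.prod_insert hn2]
  have hp2 : (∏ j ∈ Finset.Icc (s+1) (s+t), (1 - PowerSeries.X ^ j : PowerSeries ℚ)) =
      (1 - PowerSeries.X ^ (s+t)) *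
      (∏ j ∈ Finset.Icc (s+1) (s+t-1), (1 - PowerSeries.X ^ j)) := by
    rw [e2, Finset.prod_insert hn2]
  have hp3 : (∏ j ∈ Finset.Icc s (s+t-1), (1 - PowerSeries.X ^ j : PowerSeries ℚ)) =
      (1 - PowerSeries.X ^ s) *
      (∏ j ∈ Finset.Icc (s+1) (s+t-1), (1 - PowerSeries.X ^ j)) := by
    rw [e3, Finset.prod_insert hn3]
  have hq3 : (∏ j ∈ Finset.Icc s (s+t-1), (1 + PowerSeries.X ^ j : PowerSeries ℚ)) =
      (1 + PowerSeries.X ^ s) *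
      (∏ j ∈ Finset.Icc (s+1) (s+t-1), (1 + PowerSeries.X ^ j)) := by
    rw [e3, Finset.prod_insert hn3]
  have hq2 : (∏ j ∈ Finset.Icc (s+1) (s+t), (1 + PowerSeries.X ^ j : PowerSeries ℚ)) =
      (1 + PowerSeries.X ^ (s+t)) *
      (∏ j ∈ Finset.Icc (s+1) (s+t-1), (1 + PowerSeries.X ^ j)) := by
    rw [e2, Finset.prod_insert hn2]
  have h1 : ((1 - PowerSeries.X ^ s) * ((1 - PowerSeries.X ^ (s+t)) *
      (∏ j ∈ Finset.Icc (s+1) (s+t-1), (1 - PowerSeries.X ^ j)))) *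
      Pgf (Finset.Icc s (s+t)) = 1 := by
    have := Pgf_mul_eq_one (Finset.Icc s (s+t)) h01
    rwa [hp1] at this
  have h2 : ((1 - PowerSeries.X ^ (s+t)) *
      (∏ j ∈ Finset.Icc (s+1) (s+t-1), (1 - PowerSeries.X ^ j))) *
      Pgf (Finset.Icc (s+1) (s+t)) = 1 := by
    have := Pgf_mul_eq_one (Finset.Icc (s+1) (s+t)) h02
    rwa [hp2] at this
  have h3 : ((1 - PowerSeries.X ^ s) *
      (∏ j ∈ Finset.Icc (s+1) (s+t-1), (1 - PowerSeries.X ^ j))) *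
      Pgf (Finset.Icc s (s+t-1)) = 1 := by
    have := Pgf_mul_eq_one (Finset.Icc s (s+t-1)) h03
    rwa [hp3] at this
  have hC : Cgf t s = ((1 + PowerSeries.X ^ s) *
      (∏ j ∈ Finset.Icc (s+1) (s+t-1), (1 + PowerSeries.X ^ j))) *
      Pgf (Finset.Icc s (s+t)) -
      (∏ j ∈ Finset.Icc (s+1) (s+t-1), (1 + PowerSeries.X ^ j)) *
      Pgf (Finset.Icc (s+1) (s+t)) := by
    rw [Cgf_eq t s ht hs, Ogf_eq _ _ hBA1 h01, Ogf_eq _ _ hBA2 h02, Sgf_eq _ h03,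
      Sgf_eq _ h04, hq3]
  have hA : Agf t s = ((1 + PowerSeries.X ^ s) *
      (∏ j ∈ Finset.Icc (s+1) (s+t-1), (1 + PowerSeries.X ^ j))) *
      Pgf (Finset.Icc s (s+t-1)) := by
    rw [Agf, Sgf_eq _ h03, hq3]
  have hA2 : Agf t (s+1) = ((1 + PowerSeries.X ^ (s+t)) *
      (∏ j ∈ Finset.Icc (s+1) (s+t-1), (1 + PowerSeries.X ^ j))) *
      Pgf (Finset.Icc (s+1) (s+t)) := by
    rw [Agf, e4, Sgf_eq _ h02, hq2]
  rw [hC, hA, hA2]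
  have hW : PowerSeries.constantCoeff (R := ℚ) ((1 - PowerSeries.X ^ s) *
      ((1 - PowerSeries.X ^ (s+t)) *
      (∏ j ∈ Finset.Icc (s+1) (s+t-1), (1 - PowerSeries.X ^ j)))) = 1 := by
    have c1 : PowerSeries.constantCoeff (R := ℚ) (1 - PowerSeries.X ^ s) = 1 := by
      rw [map_sub, map_one, map_pow, PowerSeries.constantCoeff_X, zero_pow hs.ne', sub_zero]
    have c2 : PowerSeries.constantCoeff (R := ℚ) (1 - PowerSeries.X ^ (s+t)) = 1 := by
      rw [map_sub, map_one, map_pow, PowerSeries.constantCoeff_X, zero_pow (by omega : s+t ≠ 0),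
        sub_zero]
    rw [map_mul, map_mul, c1, c2, cc_prod_one _ h04, mul_one, mul_one]
  apply mul_left_cancel₀ (ne_zero_of_cc hW)
  rw [pow_add] at h1 h2 ⊢
  linear_combination
    ((1 - PowerSeries.X ^ t) * (1 + PowerSeries.X ^ s) *
      (∏ j ∈ Finset.Icc (s+1) (s+t-1), (1 + PowerSeries.X ^ j))) * h1 +
    (((1 + PowerSeries.X ^ s * PowerSeries.X ^ t) * (1 - PowerSeries.X ^ s) -
      (1 - PowerSeries.X ^ t) * (1 - PowerSeries.X ^ s)) *
      (∏ j ∈ Finset.Icc (s+1) (s+t-1), (1 + PowerSeries.X ^ j))) * h2 -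
    ((1 + PowerSeries.X ^ s) * (1 - PowerSeries.X ^ s * PowerSeries.X ^ t) *
      (∏ j ∈ Finset.Icc (s+1) (s+t-1), (1 + PowerSeries.X ^ j))) * h3

lemma pcnt_zero_eq_one (A : Finset ℕ) (h0 : 0 ∉ A) : pcnt A 0 = 1 := by
  rw [pcnt]
  haveI : Unique {M : Multiset ℕ // (∀ x ∈ M, x ∈ A) ∧ M.sum = 0} := by
    refine ⟨⟨⟨0, by simp⟩⟩, fun M => Subtype.ext ?_⟩
    apply Multiset.eq_zero_of_forall_notMem
    intro x hx
    have h1 : x ≤ M.1.sum := Multiset.single_le_sum (fun y _ => Nat.zero_le y) x hx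
    have h2 := M.2.2
    have hx0 : x = 0 := by omega
    exact h0 (hx0 ▸ M.2.1 x hx)
  exact Nat.card_unique

lemma scnt_zero_eq_one (A : Finset ℕ) (h0 : 0 ∉ A) : scnt A 0 = 1 := by
  rw [scnt]
  haveI : Unique {F : Finset ℕ // (∀ x ∈ F, x ∈ A) ∧ (∑ x ∈ F, x) = 0} := by
    refine ⟨⟨⟨∅, by simp⟩⟩, fun F => Subtype.ext ?_⟩
    apply Finset.eq_empty_of_forall_notMem
    intro x hx
    have h1 : x ≤ ∑ y ∈ F.1, y := Finset.single_le_sum (fun y _ => Nat.zero_le y) hx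
    have h2 := F.2.2
    have hx0 : x = 0 := by omega
    exact h0 (hx0 ▸ F.2.1 x hx)
  exact Nat.card_unique

lemma pcnt_small (A : Finset ℕ) (s : ℕ) (hA : ∀ a ∈ A, s ≤ a) (n : ℕ) (hn0 : 0 < n)
    (hns : n < s) : pcnt A n = 0 := by
  rw [pcnt]
  haveI : IsEmpty {M : Multiset ℕ // (∀ x ∈ M, x ∈ A) ∧ M.sum = n} := by
    constructor
    rintro ⟨M, hmem, hsum⟩
    have hM : M ≠ 0 := by intro h; rw [h] at hsum; simp at hsum; omega
    rcases Multiset.exists_mem_of_ne_zero hM with ⟨x, hx⟩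
    have h1 : s ≤ x := hA x (hmem x hx)
    have h2 : x ≤ M.sum := Multiset.single_le_sum (fun y _ => Nat.zero_le y) x hx
    omega
  exact Nat.card_of_isEmpty

lemma scnt_small (A : Finset ℕ) (s : ℕ) (hA : ∀ a ∈ A, s ≤ a) (n : ℕ) (hn0 : 0 < n)
    (hns : n < s) : scnt A n = 0 := by
  rw [scnt]
  haveI : IsEmpty {F : Finset ℕ // (∀ x ∈ F, x ∈ A) ∧ (∑ x ∈ F, x) = n} := by
    constructor
    rintro ⟨F, hmem, hsum⟩
    have hne : F.Nonempty := by
      rcases Finset.eq_empty_or_nonempty F with h | h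
      · rw [h] at hsum; simp at hsum; omega
      · exact h
    rcases hne with ⟨x, hx⟩
    have h1 : s ≤ x := hA x (hmem x hx)
    have h2 : x ≤ ∑ y ∈ F, y := Finset.single_le_sum (fun y _ => Nat.zero_le y) hx
    omega
  exact Nat.card_of_isEmpty

lemma Agf_coeff_small (t s n : ℕ) (hs : 0 < s) (hn : n < s) :
    (PowerSeries.coeff (R := ℚ) n) (Agf t s) = (PowerSeries.coeff (R := ℚ) n) (1 : PowerSeries ℚ) := by
  have h0 : (0:ℕ) ∉ Finset.Icc s (s+t-1) := by rw [Finset.mem_Icc]; omega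
  have hA : ∀ a ∈ Finset.Icc s (s+t-1), s ≤ a := fun a ha => (Finset.mem_Icc.1 ha).1
  rw [Agf, PowerSeries.coeff_mul, PowerSeries.coeff_one,
    Finset.Nat.sum_antidiagonal_eq_sum_range_succ_mk]
  simp only [Sgf, Pgf, PowerSeries.coeff_mk]
  split_ifs with h
  · subst h
    rw [Finset.sum_range_one]
    norm_num
    rw [scnt_zero_eq_one _ h0, pcnt_zero_eq_one _ h0]
    norm_num
  · apply Finset.sum_eq_zero
    intro i hi
    rw [Finset.mem_range] at hi
    rcases Nat.eq_zero_or_pos i with hi0 | hi0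
    · subst hi0
      rw [pcnt_small _ s hA (n - 0) (by omega) (by omega)]
      norm_num
    · rw [scnt_small _ s hA i hi0 (by omega)]
      norm_num

lemma coeff_mul_right_congr {f g h : PowerSeries ℚ} {n : ℕ}
    (H : ∀ j ≤ n, (PowerSeries.coeff (R := ℚ) j) f = (PowerSeries.coeff (R := ℚ) j) g) :
    (PowerSeries.coeff (R := ℚ) n) (h * f) = (PowerSeries.coeff (R := ℚ) n) (h * g) := by
  rw [PowerSeries.coeff_mul, PowerSeries.coeff_mul]
  apply Finset.sum_congr rfl
  intro p hp
  rw [Finset.HasAntidiagonal.mem_antidiagonal] at hp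
  rw [H p.2 (by omega)]

lemma telescope (t : ℕ) : ∀ n : ℕ,
    ∑ s ∈ Finset.Icc 1 n, (Agf t s - Agf t (s+1)) = Agf t 1 - Agf t (n+1) := by
  intro n
  induction n with
  | zero => simp
  | succ n ih =>
    rw [Finset.sum_Icc_succ_top (by omega : 1 ≤ n + 1), ih]
    ring

lemma main_eq (t : ℕ) (ht : 0 < t) :
    (1 - PowerSeries.X ^ t) * Ggf t = Agf t 1 - 1 := by
  ext n
  have hcoeffs : ∀ j ≤ n, (PowerSeries.coeff (R := ℚ) j) (Ggf t) =
      (PowerSeries.coeff (R := ℚ) j) (∑ s ∈ Finset.Icc 1 n, Cgf t s) := by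
    intro j hj
    rw [map_sum]
    simp only [Ggf, Cgf, PowerSeries.coeff_mk]
    rw [gcnt_eq t j]
    push_cast
    apply Finset.sum_subset (Finset.Icc_subset_Icc_right hj)
    intro x hx hnx
    rw [Finset.mem_Icc] at hx hnx
    rw [ccnt_zero t x j (by omega)]
    norm_num
  calc (PowerSeries.coeff (R := ℚ) n) ((1 - PowerSeries.X ^ t) * Ggf t)
      = (PowerSeries.coeff (R := ℚ) n) ((1 - PowerSeries.X ^ t) * ∑ s ∈ Finset.Icc 1 n, Cgf t s) :=
        coeff_mul_right_congr hcoeffs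
    _ = (PowerSeries.coeff (R := ℚ) n) (∑ s ∈ Finset.Icc 1 n,
          (1 - PowerSeries.X ^ t) * Cgf t s) := by rw [Finset.mul_sum]
    _ = (PowerSeries.coeff (R := ℚ) n) (∑ s ∈ Finset.Icc 1 n, (Agf t s - Agf t (s+1))) := by
        rw [Finset.sum_congr rfl
          (fun s hs => key_identity t s ht ((Finset.mem_Icc.1 hs).1))]
    _ = (PowerSeries.coeff (R := ℚ) n) (Agf t 1 - Agf t (n+1)) := by rw [telescope]
    _ = (PowerSeries.coeff (R := ℚ) n) (Agf t 1 - 1) := by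
        rw [map_sub, map_sub, Agf_coeff_small t (n+1) n (by omega) (by omega)]

lemma prod_Icc_one_eq_range (f : ℕ → PowerSeries ℚ) : ∀ t : ℕ,
    ∏ j ∈ Finset.Icc 1 t, f j = ∏ k ∈ Finset.range t, f (k+1) := by
  intro t
  induction t with
  | zero => simp
  | succ t ih => rw [Finset.prod_Icc_succ_top (by omega : 1 ≤ t + 1), ih,
      Finset.prod_range_succ]

theorem chern_gen_fun (t : ℕ) (ht : 0 < t) :
    (PowerSeries.mk fun n => (Nat.card {π : OP // InG t π ∧ π.wt = n} : ℚ)) =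
      (1 - PowerSeries.X ^ t)⁻¹ *
        ((∏ k ∈ Finset.range t, (1 + PowerSeries.X ^ (k + 1) : PowerSeries ℚ)) *
          (∏ k ∈ Finset.range t, (1 - PowerSeries.X ^ (k + 1) : PowerSeries ℚ))⁻¹ - 1) := by
  have hId : Finset.Icc 1 (1+t-1) = Finset.Icc 1 t := by congr 1; omega
  have h0 : (0:ℕ) ∉ Finset.Icc 1 t := by rw [Finset.mem_Icc]; omega
  have hQ : (∏ k ∈ Finset.range t, (1 - PowerSeries.X ^ (k+1) : PowerSeries ℚ)) *
      Pgf (Finset.Icc 1 t) = 1 := by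
    have := Pgf_mul_eq_one (Finset.Icc 1 t) h0
    rwa [prod_Icc_one_eq_range] at this
  have hccQ : PowerSeries.constantCoeff (R := ℚ)
      (∏ k ∈ Finset.range t, (1 - PowerSeries.X ^ (k+1))) = 1 := by
    rw [map_prod]
    rw [Finset.prod_congr rfl (fun j _ => ?_), Finset.prod_const_one]
    rw [map_sub, map_one, map_pow, PowerSeries.constantCoeff_X,
      zero_pow (Nat.succ_ne_zero j), sub_zero]
  have hPinv : Pgf (Finset.Icc 1 t) =
      (∏ k ∈ Finset.range t, (1 - PowerSeries.X ^ (k+1)))⁻¹ := by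
    have h2 := PowerSeries.mul_inv_cancel _ (by rw [hccQ]; exact one_ne_zero)
    exact mul_left_cancel₀ (ne_zero_of_cc hccQ) (hQ.trans h2.symm)
  have hA1 : Agf t 1 = (∏ k ∈ Finset.range t, (1 + PowerSeries.X ^ (k+1))) *
      (∏ k ∈ Finset.range t, (1 - PowerSeries.X ^ (k+1)))⁻¹ := by
    rw [Agf, hId, Sgf_eq _ h0, prod_Icc_one_eq_range, hPinv]
  have hcc1 : PowerSeries.constantCoeff (R := ℚ) (1 - PowerSeries.X ^ t) ≠ 0 := by
    rw [map_sub, map_one, map_pow, PowerSeries.constantCoeff_X, zero_pow ht.ne', sub_zero]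
    exact one_ne_zero
  have hG : Ggf t = (1 - PowerSeries.X ^ t)⁻¹ * (Agf t 1 - 1) := by
    have h3 : (1 - PowerSeries.X ^ t)⁻¹ * ((1 - PowerSeries.X ^ t) * Ggf t) =
        (1 - PowerSeries.X ^ t)⁻¹ * (Agf t 1 - 1) := by rw [main_eq t ht]
    rwa [← mul_assoc, PowerSeries.inv_mul_cancel _ hcc1, one_mul] at h3
  show Ggf t = _
  rw [hG, hA1]
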